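/- A 3×3 complex matrix S is a trifocal essential matrix if and only if det S = 0 and trace(S Sᵀ)² − 2 trace((S Sᵀ)²) = 0. -/

import Mathlib

open Matrix

def IsTrifocalEssential (S : Matrix (Fin 3) (Fin 3) ℂ) : Prop :=
  ∃ s₁ t₁ t₂ s₂ : Fin 3 → ℂ, s₁ ≠ 0 ∧ s₂ ≠ 0 ∧ s₁ ⬝ᵥ s₁ = 0 ∧ s₂ ⬝ᵥ s₂ = 0 ∧
    S = vecMulVec s₁ t₁ + vecMulVec t₂ s₂

lemma det_sum_vecMulVec (u₁ v₁ u₂ v₂ : Fin 3 → ℂ) :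
    (vecMulVec u₁ v₁ + vecMulVec u₂ v₂).det = 0 := by
  simp [Matrix.det_fin_three, vecMulVec_apply]
  ring

lemma trace_ident (u₁ v₁ u₂ v₂ : Fin 3 → ℂ) :
    ((vecMulVec u₁ v₁ + vecMulVec u₂ v₂) * (vecMulVec u₁ v₁ + vecMulVec u₂ v₂)ᵀ).trace ^ 2
      - 2 * (((vecMulVec u₁ v₁ + vecMulVec u₂ v₂) * (vecMulVec u₁ v₁ + vecMulVec u₂ v₂)ᵀ) *
        ((vecMulVec u₁ v₁ + vecMulVec u₂ v₂) * (vecMulVec u₁ v₁ + vecMulVec u₂ v₂)ᵀ)).trace =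
    -((((u₁ ⬝ᵥ u₁) * (v₁ ⬝ᵥ v₁) - (v₂ ⬝ᵥ v₂) * (u₂ ⬝ᵥ u₂))^2
      + 4 * ((u₁ ⬝ᵥ u₁) * (v₁ ⬝ᵥ v₂) + (v₂ ⬝ᵥ v₂) * (u₁ ⬝ᵥ u₂))
          * ((u₁ ⬝ᵥ u₂) * (v₁ ⬝ᵥ v₁) + (v₁ ⬝ᵥ v₂) * (u₂ ⬝ᵥ u₂)))) := by
  simp only [Matrix.trace_fin_three, Matrix.mul_apply, Matrix.add_apply, Matrix.transpose_apply,
    vecMulVec_apply, dotProduct, Fin.sum_univ_three]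
  ring

lemma quad_root (a b c : ℂ) :
    ∃ α β : ℂ, ¬(α = 0 ∧ β = 0) ∧ a*α^2 + b*α*β + c*β^2 = 0 := by
  by_cases ha : a = 0
  · exact ⟨1, 0, by simp, by simp [ha]⟩
  · obtain ⟨d, hd⟩ := IsAlgClosed.exists_pow_nat_eq (b^2 - 4*a*c) (n := 2) (by norm_num)
    refine ⟨-b + d, 2*a, fun h => ha (by simpa using h.2), by linear_combination a * hd⟩

lemma common_root (a b c a' b' c' : ℂ)
    (h : (a*c' - a'*c)^2 - (a*b' - a'*b)*(b*c' - b'*c) = 0) :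
    ∃ α β : ℂ, ¬(α = 0 ∧ β = 0) ∧ a*α^2 + b*α*β + c*β^2 = 0 ∧ a'*α^2 + b'*α*β + c'*β^2 = 0 := by
  by_cases ha : a = 0
  · subst ha
    by_cases hb : b = 0
    · subst hb
      by_cases hc : c = 0
      · obtain ⟨α, β, hne, h2⟩ := quad_root a' b' c'
        exact ⟨α, β, hne, by simp [hc], h2⟩
      · have h2 : a' * c * (a' * c) = 0 := by linear_combination h
        have ha' : a' = 0 := by
          rcases mul_eq_zero.mp h2 with h3 | h3 <;>
            rcases mul_eq_zero.mp h3 with h4 | h4 <;> first | exact h4 | exact absurd h4 hc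
        exact ⟨1, 0, by simp, by simp, by simp [ha']⟩
    · have hres : a' * (a'*c^2 - b*b'*c + b^2*c') = 0 := by linear_combination h
      rcases mul_eq_zero.mp hres with h1 | h1
      · exact ⟨1, 0, by simp, by simp, by simp [h1]⟩
      · exact ⟨c, -b, fun h2 => hb (by simpa using h2.2), by ring,
          by linear_combination h1⟩
  · obtain ⟨d, hd⟩ := IsAlgClosed.exists_pow_nat_eq (b^2 - 4*a*c) (n := 2) (by norm_num)
    have key : (a'*(-b+d)^2 + 2*a*b'*(-b+d) + 4*a^2*c') * (a'*(-b-d)^2 + 2*a*b'*(-b-d) + 4*a^2*c')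
        = 16*a^2*((a*c' - a'*c)^2 - (a*b' - a'*b)*(b*c' - b'*c)) := by
      linear_combination (a'^2*(d^2 - b^2 - 4*a*c) + 4*a*a'*b*b' + 8*a^2*a'*c' - 4*a^2*b'^2) * hd
    rw [h, mul_zero] at key
    rcases mul_eq_zero.mp key with h1 | h1
    · refine ⟨-b + d, 2*a, fun h2 => ha (by simpa using h2.2), by linear_combination a * hd, ?_⟩
      linear_combination h1
    · refine ⟨-b - d, 2*a, fun h2 => ha (by simpa using h2.2), by linear_combination a * hd, ?_⟩
      linear_combination h1

lemma decomp (S : Matrix (Fin 3) (Fin 3) ℂ) (h : S.det = 0) :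
    ∃ u₁ v₁ u₂ v₂ : Fin 3 → ℂ, S = vecMulVec u₁ v₁ + vecMulVec u₂ v₂ := by
  obtain ⟨w, hwne, hw⟩ := (Matrix.exists_vecMul_eq_zero_iff (M := S)).mpr h
  have hj : ∀ j, w 0 * S 0 j + w 1 * S 1 j + w 2 * S 2 j = 0 := by
    intro j
    have := congrFun hw j
    simpa [Matrix.vecMul, dotProduct, Fin.sum_univ_three] using this
  have hk : ∃ k, w k ≠ 0 := by
    by_contra hc
    push_neg at hc
    exact hwne (funext hc)
  obtain ⟨k, hk⟩ := hk
  fin_cases k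
  · have h0 : w 0 ≠ 0 := by simpa using hk
    refine ⟨![-(w 1)/w 0, 1, 0], S 1, ![-(w 2)/w 0, 0, 1], S 2, ?_⟩
    ext i j
    fin_cases i <;> simp [-cons_vecMulVec, vecMulVec_apply]
    field_simp
    linear_combination hj j
  · have h0 : w 1 ≠ 0 := by simpa using hk
    refine ⟨![1, -(w 0)/w 1, 0], S 0, ![0, -(w 2)/w 1, 1], S 2, ?_⟩
    ext i j
    fin_cases i <;> simp [-cons_vecMulVec, vecMulVec_apply]
    field_simp
    linear_combination hj j
  · have h0 : w 2 ≠ 0 := by simpa using hk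
    refine ⟨![1, 0, -(w 0)/w 2], S 0, ![0, 1, -(w 1)/w 2], S 1, ?_⟩
    ext i j
    fin_cases i <;> simp [-cons_vecMulVec, vecMulVec_apply]
    field_simp
    linear_combination hj j

lemma patch (S : Matrix (Fin 3) (Fin 3) ℂ) (s₁ t₁ t₂ s₂ : Fin 3 → ℂ)
    (h1 : s₁ ⬝ᵥ s₁ = 0) (h2 : s₂ ⬝ᵥ s₂ = 0)
    (hS : S = vecMulVec s₁ t₁ + vecMulVec t₂ s₂) : IsTrifocalEssential S := by
  have hw0ne : (![1, Complex.I, 0] : Fin 3 → ℂ) ≠ 0 := by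
    intro h
    have := congrFun h 0
    simp at this
  have hw0iso : (![1, Complex.I, 0] : Fin 3 → ℂ) ⬝ᵥ ![1, Complex.I, 0] = 0 := by
    simp [dotProduct, Fin.sum_univ_three, Complex.I_mul_I]
  by_cases hs1 : s₁ = 0
  · by_cases hs2 : s₂ = 0
    · exact ⟨![1, Complex.I, 0], 0, 0, ![1, Complex.I, 0], hw0ne, hw0ne, hw0iso, hw0iso,
        by ext i j; simp [hS, hs1, hs2, vecMulVec_apply]⟩
    · exact ⟨![1, Complex.I, 0], 0, t₂, s₂, hw0ne, hs2, hw0iso, h2,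
        by ext i j; simp [hS, hs1, vecMulVec_apply]⟩
  · by_cases hs2 : s₂ = 0
    · exact ⟨s₁, t₁, 0, ![1, Complex.I, 0], hs1, hw0ne, h1, hw0iso,
        by ext i j; simp [hS, hs2, vecMulVec_apply]⟩
    · exact ⟨s₁, t₁, t₂, s₂, hs1, hs2, h1, h2, hS⟩

theorem stmt_4 (S : Matrix (Fin 3) (Fin 3) ℂ) :
    IsTrifocalEssential S ↔
      S.det = 0 ∧ (S * Sᵀ).trace ^ 2 - 2 * ((S * Sᵀ) * (S * Sᵀ)).trace = 0 := by
  constructor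
  · rintro ⟨s₁, t₁, t₂, s₂, hs₁, hs₂, hi₁, hi₂, rfl⟩
    refine ⟨det_sum_vecMulVec _ _ _ _, ?_⟩
    rw [trace_ident s₁ t₁ t₂ s₂, hi₁, hi₂]
    ring
  · rintro ⟨hdet, htr⟩
    obtain ⟨u₁, v₁, u₂, v₂, hS⟩ := decomp S hdet
    rw [hS] at htr
    have hres := trace_ident u₁ v₁ u₂ v₂
    obtain ⟨α, β, hne, h1, h2⟩ := common_root (u₁ ⬝ᵥ u₁) (2*(u₁ ⬝ᵥ u₂)) (u₂ ⬝ᵥ u₂)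
      (v₂ ⬝ᵥ v₂) (-2*(v₁ ⬝ᵥ v₂)) (v₁ ⬝ᵥ v₁) (by linear_combination hres - htr)
    have hiso1 : (α • u₁ + β • u₂) ⬝ᵥ (α • u₁ + β • u₂) = 0 := by
      simp only [dotProduct, Fin.sum_univ_three, Pi.add_apply, Pi.smul_apply, smul_eq_mul] at h1 ⊢
      linear_combination h1
    have hiso2 : ((-β) • v₁ + α • v₂) ⬝ᵥ ((-β) • v₁ + α • v₂) = 0 := by
      simp only [dotProduct, Fin.sum_univ_three, Pi.add_apply, Pi.smul_apply, smul_eq_mul] at h2 ⊢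
      linear_combination h2
    by_cases hα : α = 0
    · have hβ : β ≠ 0 := fun h => hne ⟨hα, h⟩
      refine patch S (α • u₁ + β • u₂) (β⁻¹ • v₂) ((-β⁻¹) • u₁) ((-β) • v₁ + α • v₂)
        hiso1 hiso2 ?_
      subst hα
      ext i j
      simp [hS, vecMulVec_apply]
      field_simp
      ring
    · refine patch S (α • u₁ + β • u₂) (α⁻¹ • v₁) (α⁻¹ • u₂) ((-β) • v₁ + α • v₂)
        hiso1 hiso2 ?_
      ext i j
      simp [hS, vecMulVec_apply]
      field_simp
      ring
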